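/- Given Hermitian positive definite Ŵ, X̂, there exists a rank-one perturbation Δ with ‖Δ‖₂ = ‖Δ‖_F ≤ αβ/(1 + |vᴴw|) such that Ŵ + X̂Δ + ΔᴴX̂ is singular, where α² = λ_min(Ŵ), β² = λ_min(X̂⁻¹ŴX̂⁻¹), v is a unit eigenvector of Ŵ^{-1/2} for eigenvalue 1/α (i.e. Ŵ^{-1/2}v = v/α), and w is the unit vector with Ŵ^{-1/2}X̂u = w/β for a unit eigenvector u of X̂Ŵ⁻¹X̂ for its smallest-related eigenvalue. -/

import Mathlib

open Matrix
open scoped ComplexOrder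

/-- The spectral norm (largest singular value) of a complex matrix. -/
noncomputable def specNorm {N : ℕ} (M : Matrix (Fin N) (Fin N) ℂ) : ℝ :=
  ‖Matrix.toEuclideanCLM (𝕜 := ℂ) M‖

/-- The Frobenius norm of a complex matrix. -/
noncomputable def frobNorm {α β : Type*} [Fintype α] [Fintype β] (M : Matrix α β ℂ) : ℝ :=
  Real.sqrt (∑ i, ∑ j, ‖M i j‖ ^ 2)

/-- The positive semidefinite square root of a positive semidefinite matrix, with the meaning
of the former `Matrix.PosSemidef.sqrt`. -/
noncomputable def psdSqrt {n 𝕜 : Type*} [Fintype n] [DecidableEq n] [RCLike 𝕜]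
    {A : Matrix n n 𝕜} (hA : A.PosSemidef) : Matrix n n 𝕜 :=
  (hA.1.eigenvectorUnitary : Matrix n n 𝕜) *
    diagonal (fun i => ((Real.sqrt (hA.1.eigenvalues i) : ℝ) : 𝕜)) *
    (star hA.1.eigenvectorUnitary : Matrix n n 𝕜)

private lemma vmv_mulVec {N : ℕ} (x y z : Fin N → ℂ) :
    Matrix.vecMulVec x y *ᵥ z = (y ⬝ᵥ z) • x := by
  ext i
  simp only [Matrix.mulVec, Matrix.vecMulVec_apply, dotProduct, Pi.smul_apply,
    smul_eq_mul, Finset.sum_mul]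
  exact Finset.sum_congr rfl fun j _ => by ring

private lemma herm_dot {N : ℕ} {A : Matrix (Fin N) (Fin N) ℂ} (hA : Aᴴ = A)
    (x y : Fin N → ℂ) : star x ⬝ᵥ (A *ᵥ y) = star (A *ᵥ x) ⬝ᵥ y := by
  rw [dotProduct_mulVec, Matrix.star_mulVec, hA]

private lemma unit_sum {N : ℕ} {x : Fin N → ℂ} (h : star x ⬝ᵥ x = 1) :
    ∑ i, ‖x i‖ ^ 2 = (1 : ℝ) := by
  have h2 : ((∑ i, ‖x i‖ ^ 2 : ℝ) : ℂ) = 1 := by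
    rw [← h, dotProduct]
    push_cast
    exact Finset.sum_congr rfl fun i _ => by
      rw [Pi.star_apply, Complex.star_def, RCLike.conj_mul]
      norm_cast
  exact_mod_cast h2

private lemma euclid_norm {N : ℕ} (x : Fin N → ℂ) :
    ‖(WithLp.equiv 2 (Fin N → ℂ)).symm x‖ = Real.sqrt (∑ i, ‖x i‖ ^ 2) := by
  rw [EuclideanSpace.norm_eq]
  simp [WithLp.equiv_symm_apply]

theorem stmt12 {N : ℕ} (What Xhat : Matrix (Fin N) (Fin N) ℂ)
    (hW : What.PosDef) (hX : Xhat.PosDef)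
    (hH : (Xhat⁻¹ * What * Xhat⁻¹).IsHermitian)
    (α β : ℝ) (hα0 : 0 < α) (hβ0 : 0 < β)
    (hα : α ^ 2 = ⨅ i, hW.1.eigenvalues i)
    (hβ : β ^ 2 = ⨅ i, hH.eigenvalues i)
    (v u w : Fin N → ℂ)
    (hv1 : star v ⬝ᵥ v = 1) (hu1 : star u ⬝ᵥ u = 1) (hw1 : star w ⬝ᵥ w = 1)
    (hv : (psdSqrt hW.posSemidef)⁻¹ *ᵥ v = ((1 / α : ℝ) : ℂ) • v)
    (hu : (Xhat * What⁻¹ * Xhat) *ᵥ u = ((1 / β ^ 2 : ℝ) : ℂ) • u)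
    (hw : (psdSqrt hW.posSemidef)⁻¹ *ᵥ (Xhat *ᵥ u) = ((1 / β : ℝ) : ℂ) • w) :
    ∃ Δ : Matrix (Fin N) (Fin N) ℂ,
      Δ.rank = 1 ∧
      specNorm Δ = frobNorm Δ ∧
      specNorm Δ ≤ α * β / (1 + ‖star v ⬝ᵥ w‖) ∧
      (What + Xhat * Δ + Δᴴ * Xhat).det = 0 := by
  classical
  have hXH : Xhatᴴ = Xhat := hX.1
  set Q : Matrix (Fin N) (Fin N) ℂ := psdSqrt hW.posSemidef with hQdef
  have hQH : Qᴴ = Q := by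
    rw [hQdef, psdSqrt, conjTranspose_mul, conjTranspose_mul, Matrix.diagonal_conjTranspose]
    simp [Matrix.star_eq_conjTranspose, mul_assoc]
    congr 3
    funext i
    exact Complex.conj_ofReal _
  have hQQ : Q * Q = What := by
    have hUU : (star hW.posSemidef.1.eigenvectorUnitary : Matrix (Fin N) (Fin N) ℂ) *
        (hW.posSemidef.1.eigenvectorUnitary : Matrix (Fin N) (Fin N) ℂ) = 1 :=
      Unitary.coe_star_mul_self _
    rw [hQdef, psdSqrt]
    conv_rhs => rw [hW.posSemidef.1.spectral_theorem, Unitary.conjStarAlgAut_apply]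
    rw [show ∀ A B C D E F : Matrix (Fin N) (Fin N) ℂ, A * B * C * (D * E * F) =
      A * (B * (C * D) * E) * F from fun A B C D E F => by simp only [mul_assoc], hUU,
      mul_one, diagonal_mul_diagonal]
    congr 3
    funext i
    simp only [Function.comp_apply]
    rw [← RCLike.ofReal_mul, Real.mul_self_sqrt (hW.posSemidef.eigenvalues_nonneg i)]
  have hQd : Q.det ≠ 0 := by
    intro h
    have h1 : Q.det * Q.det = What.det := by rw [← Matrix.det_mul, hQQ]
    rw [h, mul_zero] at h1
    exact hW.det_pos.ne' h1.symm
  have hQu : IsUnit Q.det := hQd.isUnit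
  have hQQi : Q * Q⁻¹ = 1 := Matrix.mul_nonsing_inv Q hQu
  have hQiH : (Q⁻¹)ᴴ = Q⁻¹ := by rw [conjTranspose_nonsing_inv, hQH]
  have hαc : ((α : ℝ) : ℂ) ≠ 0 := by exact_mod_cast hα0.ne'
  have hβc : ((β : ℝ) : ℂ) ≠ 0 := by exact_mod_cast hβ0.ne'
  have hv' : Q⁻¹ *ᵥ v = ((α : ℂ))⁻¹ • v := by
    rw [hv]; congr 1; push_cast; rw [one_div]
  have hw' : Q⁻¹ *ᵥ (Xhat *ᵥ u) = ((β : ℂ))⁻¹ • w := by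
    rw [hw]; congr 1; push_cast; rw [one_div]
  have hQv : Q *ᵥ v = ((α : ℝ) : ℂ) • v := by
    have h := congrArg (fun x => Q *ᵥ x) hv'
    rw [Matrix.mulVec_mulVec, hQQi, Matrix.one_mulVec, Matrix.mulVec_smul] at h
    conv_rhs => rw [h, smul_smul, mul_inv_cancel₀ hαc, one_smul]
  have hXu : Xhat *ᵥ u = ((β : ℂ))⁻¹ • (Q *ᵥ w) := by
    have h := congrArg (fun x => Q *ᵥ x) hw'
    rw [Matrix.mulVec_mulVec, hQQi, Matrix.one_mulVec, Matrix.mulVec_smul] at h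
    exact h
  have hQw : Q *ᵥ w = ((β : ℝ) : ℂ) • (Xhat *ᵥ u) := by
    rw [hXu, smul_smul, mul_inv_cancel₀ hβc, one_smul]
  set a : ℂ := star v ⬝ᵥ w with ha
  set aa : ℝ := ‖a‖ with haa
  have haa0 : 0 ≤ aa := norm_nonneg a
  set e : ℂ := if a = 0 then 1 else (aa : ℂ) / a with he
  have hea : e * a = (aa : ℂ) := by
    by_cases h : a = 0
    · simp [he, h, haa]
    · rw [he, if_neg h, div_mul_cancel₀ _ h]
  have heabs : ‖e‖ = 1 := by
    by_cases h : a = 0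
    · simp [he, h]
    · rw [he, if_neg h, norm_div, Complex.norm_real, Real.norm_of_nonneg haa0, ← haa,
        div_self (by simpa [haa] using h)]
  have hee : (starRingEnd ℂ) e * e = 1 := by
    rw [mul_comm, Complex.mul_conj]
    norm_cast
    rw [Complex.normSq_eq_norm_sq, heabs, one_pow]
  have h1aa : (0 : ℝ) < 1 + aa := by linarith
  have h1aaC : (1 : ℂ) + (aa : ℂ) ≠ 0 := by
    exact_mod_cast (show ((1 + aa : ℝ) : ℂ) ≠ 0 by exact_mod_cast h1aa.ne')
  set r : ℝ := α * β / (1 + aa) with hr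
  have hr0 : 0 < r := div_pos (mul_pos hα0 hβ0) h1aa
  set c : ℂ := -(r : ℂ) * e with hc
  have hcabs : ‖c‖ = r := by
    rw [hc, norm_mul, norm_neg, Complex.norm_real, Real.norm_of_nonneg hr0.le, heabs, mul_one]
  have hc0 : c ≠ 0 := by
    intro h
    rw [h, norm_zero] at hcabs
    exact hr0.ne hcabs
  set Δ : Matrix (Fin N) (Fin N) ℂ := c • Matrix.vecMulVec u (star v) with hΔ
  set z : Fin N → ℂ := ((α : ℂ))⁻¹ • v + e • (Q⁻¹ *ᵥ w) with hz
  -- dot products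
  have hvQiw : star v ⬝ᵥ (Q⁻¹ *ᵥ w) = ((α : ℂ))⁻¹ * a := by
    rw [herm_dot hQiH, hv', star_smul, smul_dotProduct, ← ha]
    simp [smul_eq_mul]
  have hd1 : star v ⬝ᵥ z = ((α : ℂ))⁻¹ * (1 + (aa : ℂ)) := by
    rw [hz, dotProduct_add, dotProduct_smul, dotProduct_smul, hv1,
      hvQiw, smul_eq_mul, smul_eq_mul]
    linear_combination ((α : ℂ))⁻¹ * hea
  have hQz : Q *ᵥ z = v + e • w := by
    rw [hz, Matrix.mulVec_add, Matrix.mulVec_smul, Matrix.mulVec_smul, hQv,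
      Matrix.mulVec_mulVec, hQQi, Matrix.one_mulVec, smul_smul, inv_mul_cancel₀ hαc, one_smul]
  have hWz : What *ᵥ z = ((α : ℝ) : ℂ) • v + (e * (β : ℂ)) • (Xhat *ᵥ u) := by
    rw [← hQQ, ← Matrix.mulVec_mulVec, hQz, Matrix.mulVec_add, hQv, Matrix.mulVec_smul, hQw,
      smul_smul]
  have hQwz : star (Q *ᵥ w) ⬝ᵥ z = (starRingEnd ℂ) a + e := by
    rw [← herm_dot hQH, hQz, dotProduct_add, dotProduct_smul, hw1, smul_eq_mul,
      mul_one, Matrix.star_dotProduct, ← ha]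
    rfl
  have hd2 : star (Xhat *ᵥ u) ⬝ᵥ z = ((β : ℂ))⁻¹ * ((starRingEnd ℂ) a + e) := by
    rw [hXu, star_smul, smul_dotProduct, hQwz]
    simp [smul_eq_mul]
  -- the matrix kills z
  have hΔz : Δ *ᵥ z = (c * (((α : ℂ))⁻¹ * (1 + (aa : ℂ)))) • u := by
    rw [hΔ, Matrix.smul_mulVec, vmv_mulVec, hd1, smul_smul]
  have hcoef1 : c * (((α : ℂ))⁻¹ * (1 + (aa : ℂ))) = -(e * (β : ℂ)) := by
    rw [hc, hr]
    push_cast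
    field_simp
  have hΔH : Δᴴ = (starRingEnd ℂ) c • Matrix.vecMulVec v (star u) := by
    rw [hΔ, Matrix.conjTranspose_smul]
    congr 1
    ext i j
    simp [Matrix.vecMulVec_apply, Matrix.conjTranspose_apply, mul_comm]
  have hconjea : (starRingEnd ℂ) e * (starRingEnd ℂ) a = (aa : ℂ) := by
    rw [← _root_.map_mul, hea, Complex.conj_ofReal]
  have hcoef2 : (starRingEnd ℂ) c * (((β : ℂ))⁻¹ * ((starRingEnd ℂ) a + e)) = -((α : ℝ) : ℂ) := by
    rw [hc, _root_.map_mul, _root_.map_neg, Complex.conj_ofReal, hr]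
    push_cast
    field_simp
    linear_combination (-1 : ℂ) * hconjea + (-1 : ℂ) * hee
  have h5 : Δᴴ *ᵥ (Xhat *ᵥ z) = (-((α : ℝ) : ℂ)) • v := by
    rw [hΔH, Matrix.smul_mulVec, vmv_mulVec, herm_dot hXH, hd2, smul_smul, hcoef2]
  have hMz : (What + Xhat * Δ + Δᴴ * Xhat) *ᵥ z = 0 := by
    rw [Matrix.add_mulVec, Matrix.add_mulVec, ← Matrix.mulVec_mulVec, ← Matrix.mulVec_mulVec,
      hWz, hΔz, Matrix.mulVec_smul, hcoef1, h5]
    module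
  have hz0 : z ≠ 0 := by
    intro h0
    have h1 : Q *ᵥ z = 0 := by rw [h0, Matrix.mulVec_zero]
    rw [hQz] at h1
    have h2 : star v ⬝ᵥ (v + e • w) = 0 := by rw [h1, dotProduct_zero]
    rw [dotProduct_add, dotProduct_smul, hv1, ← ha, smul_eq_mul, hea] at h2
    exact h1aaC (by linear_combination h2)
  have hdet : (What + Xhat * Δ + Δᴴ * Xhat).det = 0 := by
    rw [← Matrix.exists_mulVec_eq_zero_iff]
    exact ⟨z, hz0, hMz⟩
  -- rank
  have hu0 : u ≠ 0 := by
    intro h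
    rw [h] at hu1
    simp at hu1
  have hrank : Δ.rank = 1 := by
    have hr1 : LinearMap.range (Matrix.mulVecLin Δ) = Submodule.span ℂ {u} := by
      apply le_antisymm
      · rintro y ⟨x, rfl⟩
        rw [Matrix.mulVecLin_apply, hΔ, Matrix.smul_mulVec, vmv_mulVec, smul_smul]
        exact Submodule.smul_mem _ _ (Submodule.mem_span_singleton_self u)
      · rw [Submodule.span_le, Set.singleton_subset_iff]
        refine ⟨c⁻¹ • v, ?_⟩
        rw [Matrix.mulVecLin_apply, hΔ, Matrix.smul_mulVec, Matrix.mulVec_smul,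
          vmv_mulVec, hv1, one_smul, smul_smul, mul_inv_cancel₀ hc0, one_smul]
    rw [Matrix.rank, hr1, finrank_span_singleton hu0]
  -- norms
  have husum : ∑ i, ‖u i‖ ^ 2 = (1 : ℝ) := unit_sum hu1
  have hvsum : ∑ i, ‖v i‖ ^ 2 = (1 : ℝ) := unit_sum hv1
  have hcn : ‖c‖ = r := hcabs
  have hfrob : frobNorm Δ = r := by
    have hentry : ∀ i j, ‖Δ i j‖ ^ 2 = ‖c‖ ^ 2 * (‖u i‖ ^ 2 * ‖v j‖ ^ 2) := by
      intro i j
      simp only [hΔ, Matrix.smul_apply, Matrix.vecMulVec_apply, Pi.star_apply, smul_eq_mul,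
        norm_mul, norm_star]
      ring
    have hsum : ∑ i, ∑ j, ‖Δ i j‖ ^ 2 = ‖c‖ ^ 2 := by
      simp_rw [hentry, ← Finset.mul_sum, ← Finset.sum_mul, husum, hvsum]
      ring
    rw [frobNorm, hsum, Real.sqrt_sq (norm_nonneg c), hcn]
  have hTapp : ∀ x : EuclideanSpace ℂ (Fin N),
      Matrix.toEuclideanCLM (𝕜 := ℂ) Δ x =
        (WithLp.equiv 2 (Fin N → ℂ)).symm (Δ *ᵥ (WithLp.equiv 2 (Fin N → ℂ) x)) := by
    intro x
    rfl
  have huE : ‖(WithLp.equiv 2 (Fin N → ℂ)).symm u‖ = 1 := by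
    rw [euclid_norm, husum, Real.sqrt_one]
  have hvE : ‖(WithLp.equiv 2 (Fin N → ℂ)).symm v‖ = 1 := by
    rw [euclid_norm, hvsum, Real.sqrt_one]
  have hspec : specNorm Δ = r := by
    rw [specNorm]
    apply le_antisymm
    · apply ContinuousLinearMap.opNorm_le_bound _ hr0.le
      intro x
      rw [hTapp x, hΔ, Matrix.smul_mulVec, vmv_mulVec, smul_smul]
      rw [show ∀ (k : ℂ) (y : Fin N → ℂ), (WithLp.equiv 2 (Fin N → ℂ)).symm (k • y) = k • (WithLp.equiv 2 (Fin N → ℂ)).symm y from fun _ _ => rfl, norm_smul, huE, mul_one, norm_mul, hcn]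
      have hinner : (inner ℂ ((WithLp.equiv 2 (Fin N → ℂ)).symm v) x : ℂ) =
          star v ⬝ᵥ (WithLp.equiv 2 (Fin N → ℂ) x) := by
        rw [EuclideanSpace.inner_eq_star_dotProduct]
        simp
        exact dotProduct_comm _ _
      have hcs := norm_inner_le_norm (𝕜 := ℂ) ((WithLp.equiv 2 (Fin N → ℂ)).symm v) x
      rw [hinner, hvE, one_mul] at hcs
      exact mul_le_mul_of_nonneg_left hcs hr0.le
    · have hTv : Matrix.toEuclideanCLM (𝕜 := ℂ) Δ ((WithLp.equiv 2 (Fin N → ℂ)).symm v) =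
          (WithLp.equiv 2 (Fin N → ℂ)).symm (c • u) := by
        rw [hTapp]
        congr 1
        rw [(WithLp.equiv 2 (Fin N → ℂ)).apply_symm_apply, hΔ, Matrix.smul_mulVec,
          vmv_mulVec, hv1, one_smul]
      have h1 := ContinuousLinearMap.le_opNorm (Matrix.toEuclideanCLM (𝕜 := ℂ) Δ)
        ((WithLp.equiv 2 (Fin N → ℂ)).symm v)
      rw [hTv, hvE, mul_one, show ∀ (k : ℂ) (y : Fin N → ℂ), (WithLp.equiv 2 (Fin N → ℂ)).symm (k • y) = k • (WithLp.equiv 2 (Fin N → ℂ)).symm y from fun _ _ => rfl, norm_smul, huE, mul_one, hcn] at h1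
      exact h1
  exact ⟨Δ, hrank, by rw [hspec, hfrob], le_of_eq hspec, hdet⟩
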